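/- Fix a nonzero f ∈ C_c(W), and let A be the subalgebra of C_c(W) generated by the template system T(f) = { g ∈ C_c(W) : g(x) = f(ax + b) for some a ∈ ℝ, b ∈ ℝ² }. Then A is dense in C_c(W) with respect to the strict inductive limit topology. -/

import Mathlib

/-! Setup: the birth-death plane, the space `C_c(W)` of compactly supported continuous
functions, the strict inductive limit (LF) topology on it, and Radon measures on `W`. -/

noncomputable section

open MeasureTheory Topology Filter Set Function
open scoped ENNReal

/-- The ambient plane `ℝ²`. -/
abbrev P2 : Type := ℝ × ℝ

/-- The birth-death plane `W = {(b,d) : b < d}`. -/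
def Wbd : Set P2 := {p | p.1 < p.2}

/-- `C_c(W)` as a submodule of `P2 → ℝ`: continuous, compactly supported functions with
(closed) support contained in the open set `W`, extended by zero to the plane. -/
def CcW : Submodule ℝ (P2 → ℝ) where
  carrier := {f | Continuous f ∧ HasCompactSupport f ∧ tsupport f ⊆ Wbd}
  zero_mem' := by
    refine ⟨continuous_zero, ?_, ?_⟩ <;>
      simp [HasCompactSupport, tsupport_eq_empty_iff.mpr rfl]
  add_mem' := by
    rintro f g ⟨hfc, hfs, hfW⟩ ⟨hgc, hgs, hgW⟩
    exact ⟨hfc.add hgc, hfs.add hgs, (tsupport_add f g).trans (union_subset hfW hgW)⟩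
  smul_mem' := by
    rintro c f ⟨hfc, hfs, hfW⟩
    refine ⟨hfc.const_smul c, ?_, ?_⟩
    · exact hfs.mono (support_const_smul_subset c f)
    · exact (closure_mono (support_const_smul_subset c f)).trans hfW

/-- The topology of uniform (sup-norm) convergence on the subspace
`C_c(K) = {f ∈ C_c(W) : supp f ⊆ K}`. -/
def supNormTop (K : Set P2) : TopologicalSpace {g : ↥CcW // tsupport (g : P2 → ℝ) ⊆ K} :=
  TopologicalSpace.induced (fun g => UniformFun.ofFun (g.1 : P2 → ℝ)) inferInstance

/-- `t` is a locally convex (vector space) topology on `C_c(W)`. -/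
def IsLocallyConvexTop (t : TopologicalSpace ↥CcW) : Prop :=
  @IsTopologicalAddGroup ↥CcW t _ ∧ @ContinuousSMul ℝ ↥CcW _ _ t ∧
    @LocallyConvexSpace ℝ ↥CcW _ _ _ _ t

/-- The strict inductive limit topology on `C_c(W)`: the finest locally convex topology
making every inclusion `C_c(K) ↪ C_c(W)`, `K ⊆ W` compact, continuous (recall that in
the lattice of topologies on a type, `≤` means finer, so the finest such topology is the
infimum). -/
def lfTopology : TopologicalSpace ↥CcW :=
  sInf {t | IsLocallyConvexTop t ∧
    ∀ K : Set P2, IsCompact K → K ⊆ Wbd →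
      @Continuous _ _ (supNormTop K) t (Subtype.val : {g : ↥CcW // tsupport (g : P2 → ℝ) ⊆ K} → ↥CcW)}

/-- The template system `T(f)`: all members of `C_c(W)` of the form `x ↦ f(a x + b)`,
`a ∈ ℝ`, `b ∈ ℝ²`. -/
def TemplateSys (f : P2 → ℝ) : Set (P2 → ℝ) :=
  {g | g ∈ CcW ∧ ∃ (a : ℝ) (b : P2), g = fun x => f (a • x + b)}

/-! ### Auxiliary material for the proof -/

section Aux

open OnePoint Metric

lemma isOpen_Wbd : IsOpen Wbd := isOpen_lt continuous_fst continuous_snd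

lemma mem_CcW_iff {p : P2 → ℝ} :
    p ∈ CcW ↔ Continuous p ∧ HasCompactSupport p ∧ tsupport p ⊆ Wbd := Iff.rfl

/-- `C_c(W)` as a non-unital subalgebra of `P2 → ℝ`. -/
def CcWna : NonUnitalSubalgebra ℝ (P2 → ℝ) where
  carrier := {p | Continuous p ∧ HasCompactSupport p ∧ tsupport p ⊆ Wbd}
  zero_mem' := CcW.zero_mem
  add_mem' := fun hp hq => CcW.add_mem hp hq
  smul_mem' := fun c _ hp => CcW.smul_mem c hp
  mul_mem' := by
    rintro p q ⟨hpc, hps, hpW⟩ ⟨hqc, hqs, hqW⟩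
    exact ⟨hpc.mul hqc, hps.mul_right, tsupport_mul_subset_left.trans hpW⟩

lemma mem_CcW_of_adjoin {f p : P2 → ℝ}
    (hp : p ∈ NonUnitalAlgebra.adjoin ℝ (TemplateSys f)) : p ∈ CcW :=
  NonUnitalAlgebra.adjoin_le (S := CcWna) (fun _ ht => ht.1) hp

/-- Extension by `0` to the one-point compactification of a subset `U`. -/
def extFun (U : Set P2) (p : P2 → ℝ) : OnePoint ↥U → ℝ :=
  fun y => y.elim 0 fun u => p u

@[simp] lemma extFun_coe (U : Set P2) (p : P2 → ℝ) (u : ↥U) :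
    extFun U p (↑u) = p u := rfl

@[simp] lemma extFun_infty (U : Set P2) (p : P2 → ℝ) :
    extFun U p ∞ = 0 := rfl

lemma extFun_add (U : Set P2) (p q : P2 → ℝ) (y : OnePoint ↥U) :
    extFun U (p + q) y = extFun U p y + extFun U q y := by
  induction y using OnePoint.rec <;> simp [extFun]

lemma extFun_mul (U : Set P2) (p q : P2 → ℝ) (y : OnePoint ↥U) :
    extFun U (p * q) y = extFun U p y * extFun U q y := by
  induction y using OnePoint.rec <;> simp [extFun]

lemma extFun_smul (U : Set P2) (c : ℝ) (p : P2 → ℝ) (y : OnePoint ↥U) :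
    extFun U (c • p) y = c * extFun U p y := by
  induction y using OnePoint.rec <;> simp [extFun]

@[simp] lemma extFun_zero (U : Set P2) (y : OnePoint ↥U) :
    extFun U (0 : P2 → ℝ) y = 0 := by
  induction y using OnePoint.rec <;> simp [extFun]

lemma continuous_extFun {U : Set P2} {p : P2 → ℝ}
    (hc : Continuous p) (hcs : HasCompactSupport p) (hsub : tsupport p ⊆ U) :
    Continuous (extFun U p) := by
  rw [OnePoint.continuous_iff]
  refine ⟨?_, hc.comp continuous_subtype_val⟩
  have hC : IsCompact ((Subtype.val : ↥U → P2) ⁻¹' tsupport p) := by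
    rw [Subtype.isCompact_iff]
    have himg : Subtype.val '' ((Subtype.val : ↥U → P2) ⁻¹' tsupport p) = tsupport p := by
      rw [Subtype.image_preimage_coe]
      exact inter_eq_self_of_subset_right hsub
    rw [himg]; exact hcs
  have hCclosed : IsClosed ((Subtype.val : ↥U → P2) ⁻¹' tsupport p) :=
    (isClosed_tsupport p).preimage continuous_subtype_val
  have h0 : extFun U p ∞ = 0 := rfl
  rw [h0]
  refine Tendsto.congr' ?_ tendsto_const_nhds
  have hmem : ((Subtype.val : ↥U → P2) ⁻¹' tsupport p)ᶜ ∈ coclosedCompact ↥U := by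
    rw [mem_coclosedCompact_iff, compl_compl, hCclosed.closure_eq]
    exact hC
  filter_upwards [hmem] with u hu
  exact (image_eq_zero_of_notMem_tsupport hu).symm

/-- Small-support templates: around any point of `W` whose surrounding closed ball stays in
`W`, there is a template nonvanishing at the point and supported in the ball. -/
lemma exists_small_template (f : P2 → ℝ) (hfc : Continuous f) (hfs : HasCompactSupport f)
    (hfW : tsupport f ⊆ Wbd) (hf0 : f ≠ 0) (x0 : P2) {r : ℝ} (hr : 0 < r)
    (hball : Metric.closedBall x0 r ⊆ Wbd) :
    ∃ t ∈ TemplateSys f, t x0 ≠ 0 ∧ tsupport t ⊆ Metric.closedBall x0 r := by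
  obtain ⟨q, hq⟩ : ∃ q, f q ≠ 0 := by
    by_contra h; push_neg at h; exact hf0 (funext h)
  obtain ⟨R0, hR0⟩ := (Metric.isBounded_iff_subset_closedBall q).1 hfs.isBounded
  set R : ℝ := max R0 0 with hRdef
  have hRsub : tsupport f ⊆ Metric.closedBall q R :=
    hR0.trans (Metric.closedBall_subset_closedBall (le_max_left _ _))
  have hRnn : (0 : ℝ) ≤ R := le_max_right _ _
  set a : ℝ := (R + 1) / r with ha_def
  have ha : 0 < a := div_pos (by linarith) hr
  set b : P2 := q - a • x0 with hb_def
  set t : P2 → ℝ := fun x => f (a • x + b) with ht_def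
  have haff : Continuous fun x : P2 => a • x + b :=
    (continuous_id.const_smul a).add continuous_const
  have hx0 : a • x0 + b = q := by rw [hb_def]; abel
  have hsupp : tsupport t ⊆ Metric.closedBall x0 r := by
    apply closure_minimal _ Metric.isClosed_closedBall
    intro x hx
    have hmem : a • x + b ∈ tsupport f := subset_tsupport f (mem_support.2 hx)
    have hd : dist (a • x + b) q ≤ R := hRsub hmem
    have hdiff : a • x + b - q = a • (x - x0) := by rw [hb_def, smul_sub]; abel
    have h2 : dist (a • x + b) q = a * ‖x - x0‖ := by
      rw [dist_eq_norm, hdiff, norm_smul, Real.norm_eq_abs, abs_of_pos ha]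
    rw [h2] at hd
    rw [Metric.mem_closedBall, dist_eq_norm]
    have h3 : ‖x - x0‖ ≤ R / a := by
      rw [le_div_iff₀ ha, mul_comm]; exact hd
    have h4 : R / a ≤ r := by
      rw [ha_def, div_div_eq_mul_div, div_le_iff₀ (show (0:ℝ) < R + 1 by linarith)]
      nlinarith
    linarith
  have hts : HasCompactSupport t :=
    (isCompact_closedBall x0 r).of_isClosed_subset (isClosed_tsupport t) hsupp
  have htCc : t ∈ CcW := ⟨hfc.comp haff, hts, hsupp.trans hball⟩
  refine ⟨t, ⟨htCc, a, b, rfl⟩, ?_, hsupp⟩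
  show f (a • x0 + b) ≠ 0
  rw [hx0]; exact hq

/-- Core approximation: any `g ∈ C_c(W)` whose support lies in the interior of a set
`K ⊆ W` can be uniformly approximated by elements of the template algebra with supports
in `interior K`. -/
lemma approx_in_K (f : P2 → ℝ) (hf : f ∈ CcW) (hf0 : f ≠ 0)
    (g : P2 → ℝ) (hg : g ∈ CcW) {K : Set P2} (hKW : K ⊆ Wbd)
    (hgK : tsupport g ⊆ interior K) {ε : ℝ} (hε : 0 < ε) :
    ∃ p ∈ NonUnitalAlgebra.adjoin ℝ (TemplateSys f), tsupport p ⊆ interior K ∧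
      ∀ x, |g x - p x| ≤ ε := by
  obtain ⟨hfc, hfs, hfW⟩ := hf
  obtain ⟨hgc, hgs, hgW⟩ := hg
  set U : Set P2 := interior K with hU_def
  have hUo : IsOpen U := isOpen_interior
  have hUW : U ⊆ Wbd := interior_subset.trans hKW
  haveI : LocallyCompactSpace ↥U := hUo.locallyCompactSpace
  set A := NonUnitalAlgebra.adjoin ℝ (TemplateSys f) with hA_def
  have tsupport_zero_sub : tsupport (0 : P2 → ℝ) ⊆ U := by
    rw [show tsupport (0 : P2 → ℝ) = ∅ from tsupport_eq_empty_iff.mpr rfl]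
    exact empty_subset _
  -- the unitalization of the supported-in-`U` part of the template algebra, inside
  -- `C(OnePoint U, ℝ)`
  set B : Subalgebra ℝ C(OnePoint ↥U, ℝ) :=
    { carrier := {h | ∃ c : ℝ, ∃ p : P2 → ℝ, p ∈ A ∧ tsupport p ⊆ U ∧
        ∀ y, h y = c + extFun U p y}
      zero_mem' := ⟨0, 0, zero_mem A, tsupport_zero_sub, fun y => by simp⟩
      one_mem' := ⟨1, 0, zero_mem A, tsupport_zero_sub, fun y => by simp⟩
      add_mem' := by
        rintro h1 h2 ⟨c1, p1, hp1, hs1, he1⟩ ⟨c2, p2, hp2, hs2, he2⟩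
        refine ⟨c1 + c2, p1 + p2, add_mem hp1 hp2,
          (tsupport_add _ _).trans (union_subset hs1 hs2), fun y => ?_⟩
        rw [ContinuousMap.add_apply, he1 y, he2 y, extFun_add]; ring
      mul_mem' := by
        rintro h1 h2 ⟨c1, p1, hp1, hs1, he1⟩ ⟨c2, p2, hp2, hs2, he2⟩
        refine ⟨c1 * c2, c1 • p2 + c2 • p1 + p1 * p2,
          add_mem (add_mem (SMulMemClass.smul_mem c1 hp2) (SMulMemClass.smul_mem c2 hp1))
            (mul_mem hp1 hp2), ?_, fun y => ?_⟩
        · refine (tsupport_add _ _).trans (union_subset ((tsupport_add _ _).trans (union_subset ?_ ?_)) ?_)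
          · exact (closure_mono (support_const_smul_subset c1 p2)).trans hs2
          · exact (closure_mono (support_const_smul_subset c2 p1)).trans hs1
          · exact tsupport_mul_subset_left.trans hs1
        · rw [ContinuousMap.mul_apply, he1 y, he2 y, extFun_add, extFun_add,
            extFun_smul, extFun_smul, extFun_mul]
          ring
      algebraMap_mem' := fun c =>
        ⟨c, 0, zero_mem A, tsupport_zero_sub, fun y => by simp⟩ } with hB_def
  -- radii of balls inside U
  have hrad : ∀ u : ↥U, ∃ r > 0, Metric.closedBall u.val r ⊆ U := fun u => by
    obtain ⟨r, hr, hballr⟩ := Metric.isOpen_iff.1 hUo u.val u.prop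
    exact ⟨r / 2, by linarith, (Metric.closedBall_subset_ball (by linarith)).trans hballr⟩
  -- members of B coming from templates supported in U
  have mkB : ∀ t : P2 → ℝ, t ∈ TemplateSys f → tsupport t ⊆ U →
      ∃ h : C(OnePoint ↥U, ℝ), ⇑h = extFun U t ∧ h ∈ B := by
    intro t ht hts
    obtain ⟨⟨htc, htcs, -⟩, -⟩ := id ht
    refine ⟨⟨extFun U t, continuous_extFun htc htcs hts⟩, rfl, ?_⟩
    exact ⟨0, t, NonUnitalAlgebra.subset_adjoin ℝ ht, hts, fun y => by simp⟩
  -- B separates points of the compactification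
  have sep : B.SeparatesPoints := by
    intro x y hxy
    induction x using OnePoint.rec with
    | infty =>
      induction y using OnePoint.rec with
      | infty => exact absurd rfl hxy
      | coe v =>
        obtain ⟨r, hr, hballU⟩ := hrad v
        obtain ⟨t, htT, htv, hts⟩ :=
          exists_small_template f hfc hfs hfW hf0 v.val hr (hballU.trans hUW)
        obtain ⟨h, hhval, hhB⟩ := mkB t htT (hts.trans hballU)
        refine ⟨⇑h, ⟨h, hhB, rfl⟩, ?_⟩
        rw [hhval]
        simpa using Ne.symm htv
    | coe u =>
      induction y using OnePoint.rec with
      | infty =>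
        obtain ⟨r, hr, hballU⟩ := hrad u
        obtain ⟨t, htT, htu, hts⟩ :=
          exists_small_template f hfc hfs hfW hf0 u.val hr (hballU.trans hUW)
        obtain ⟨h, hhval, hhB⟩ := mkB t htT (hts.trans hballU)
        refine ⟨⇑h, ⟨h, hhB, rfl⟩, ?_⟩
        rw [hhval]
        simpa using htu
      | coe v =>
        have huv : u.val ≠ v.val := by
          intro h
          exact hxy (congrArg _ (Subtype.ext h))
        have hduv : 0 < dist u.val v.val := dist_pos.2 huv
        obtain ⟨r0, hr0, hballU⟩ := hrad u
        set r : ℝ := min r0 (dist u.val v.val / 2) with hr_def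
        have hr : 0 < r := lt_min hr0 (by linarith)
        have hballU' : Metric.closedBall u.val r ⊆ U :=
          (Metric.closedBall_subset_closedBall (min_le_left _ _)).trans hballU
        obtain ⟨t, htT, htu, hts⟩ :=
          exists_small_template f hfc hfs hfW hf0 u.val hr (hballU'.trans hUW)
        obtain ⟨h, hhval, hhB⟩ := mkB t htT (hts.trans hballU')
        refine ⟨⇑h, ⟨h, hhB, rfl⟩, ?_⟩
        rw [hhval]
        have hv0 : t v.val = 0 := by
          apply image_eq_zero_of_notMem_tsupport
          intro hmemv
          have := hts hmemv
          rw [Metric.mem_closedBall] at this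
          have hle : r ≤ dist u.val v.val / 2 := min_le_right _ _
          rw [dist_comm] at this
          linarith
        simp only [extFun_coe]
        rw [hv0]
        exact htu
  have htop := ContinuousMap.subalgebra_topologicalClosure_eq_top_of_separatesPoints B sep
  set gextC : C(OnePoint ↥U, ℝ) := ⟨extFun U g, continuous_extFun hgc hgs hgK⟩ with hgext
  have hmem : gextC ∈ closure (B : Set C(OnePoint ↥U, ℝ)) := by
    rw [← Subalgebra.topologicalClosure_coe, htop]
    simp
  obtain ⟨h, hhB, hdist⟩ := Metric.mem_closure_iff.1 hmem (ε / 2) (by linarith)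
  obtain ⟨c, p, hpA, hpU, hval⟩ := hhB
  refine ⟨p, hpA, hpU, ?_⟩
  have hcbound : |c| < ε / 2 := by
    have h1 : dist (gextC ∞) (h ∞) ≤ dist gextC h :=
      ContinuousMap.dist_apply_le_dist (f := gextC) (g := h) ∞
    have h2 : gextC ∞ = 0 := rfl
    have h3 : h ∞ = c := by rw [hval ∞, extFun_infty, add_zero]
    rw [h2, h3, Real.dist_eq] at h1
    calc |c| = |0 - c| := by rw [zero_sub, abs_neg]
      _ ≤ dist gextC h := h1
      _ < ε / 2 := hdist
  intro x
  by_cases hx : x ∈ U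
  · set u : ↥U := ⟨x, hx⟩ with hu_def
    have h1 : dist (gextC ↑u) (h ↑u) ≤ dist gextC h :=
      ContinuousMap.dist_apply_le_dist (f := gextC) (g := h) ↑u
    have h2 : gextC ↑u = g x := rfl
    have h3 : h ↑u = c + p x := by rw [hval ↑u, extFun_coe]
    rw [h2, h3, Real.dist_eq] at h1
    have h4 : |g x - (c + p x)| < ε / 2 := lt_of_le_of_lt h1 hdist
    calc |g x - p x| = |(g x - (c + p x)) + c| := by ring_nf
      _ ≤ |g x - (c + p x)| + |c| := abs_add_le _ _
      _ ≤ ε := by linarith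
  · have hg0 : g x = 0 := image_eq_zero_of_notMem_tsupport (fun hmem => hx (hgK hmem))
    have hp0 : p x = 0 := image_eq_zero_of_notMem_tsupport (fun hmem => hx (hpU hmem))
    rw [hg0, hp0]
    simpa using le_of_lt hε

end Aux

/-- For a fixed nonzero `f ∈ C_c(W)`, the (non-unital) subalgebra of
`C_c(W)` generated by the template system `T(f)` — all finite real-linear combinations
of finite products of rescaled translates of `f` — is dense in `C_c(W)` for the strict
inductive limit topology. -/
theorem template_subalgebra_dense
    (f : P2 → ℝ) (hf : f ∈ CcW) (hf0 : f ≠ 0) :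
    @Dense ↥CcW lfTopology
      {g : ↥CcW | (g : P2 → ℝ) ∈ NonUnitalAlgebra.adjoin ℝ (TemplateSys f)} := by
  intro g
  obtain ⟨hgc, hgs, hgW⟩ := g.2
  obtain ⟨K, hKc, hgK, hKW⟩ := exists_compact_between hgs isOpen_Wbd hgW
  -- uniform approximants with supports in the fixed compact K
  have happrox : ∀ n : ℕ, ∃ p, p ∈ NonUnitalAlgebra.adjoin ℝ (TemplateSys f) ∧
      tsupport p ⊆ K ∧ ∀ x, |(g : P2 → ℝ) x - p x| ≤ ((n : ℝ) + 1)⁻¹ := by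
    intro n
    obtain ⟨p, h1, h2, h3⟩ := approx_in_K f hf hf0 (g : P2 → ℝ) ⟨hgc, hgs, hgW⟩ hKW hgK
      (ε := ((n : ℝ) + 1)⁻¹) (by positivity)
    exact ⟨p, h1, h2.trans interior_subset, h3⟩
  choose p hpA hpK hpb using happrox
  have hpCc : ∀ n, p n ∈ CcW := fun n => mem_CcW_of_adjoin (hpA n)
  set q : ℕ → {h : ↥CcW // tsupport ((h : ↥CcW) : P2 → ℝ) ⊆ K} :=
    fun n => ⟨⟨p n, hpCc n⟩, hpK n⟩ with hq_def
  set q0 : {h : ↥CcW // tsupport ((h : ↥CcW) : P2 → ℝ) ⊆ K} :=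
    ⟨g, hgK.trans interior_subset⟩ with hq0_def
  -- uniform convergence
  have hunif : TendstoUniformly (fun n => p n) (g : P2 → ℝ) atTop := by
    rw [Metric.tendstoUniformly_iff]
    intro ε hε
    obtain ⟨N, hN⟩ := exists_nat_gt ε⁻¹
    filter_upwards [eventually_ge_atTop N] with n hn x
    have hNn : (ε : ℝ)⁻¹ < (n : ℝ) + 1 := by
      have : (N : ℝ) ≤ (n : ℝ) := Nat.cast_le.2 hn
      linarith
    have hinv : ((n : ℝ) + 1)⁻¹ < ε := (inv_lt_comm₀ hε (by positivity)).1 hNn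
    calc dist ((g : P2 → ℝ) x) (p n x) = |(g : P2 → ℝ) x - p n x| := Real.dist_eq _ _
      _ ≤ ((n : ℝ) + 1)⁻¹ := hpb n x
      _ < ε := hinv
  -- convergence in the sup-norm topology of C_c(K)
  have hq : @Filter.Tendsto _ _ q atTop (@nhds _ (supNormTop K) q0) := by
    rw [supNormTop, nhds_induced, tendsto_comap_iff]
    exact UniformFun.tendsto_iff_tendstoUniformly.2 hunif
  -- the inclusion C_c(K) ↪ C_c(W) is continuous for the LF topology
  have hι : @Continuous _ _ (supNormTop K) lfTopology
      (Subtype.val : {h : ↥CcW // tsupport ((h : ↥CcW) : P2 → ℝ) ⊆ K} → ↥CcW) := by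
    rw [lfTopology]
    exact continuous_sInf_rng.2 fun t ht => ht.2 K hKc hKW
  have htend : @Filter.Tendsto _ _ (fun n => (q n).1) atTop (@nhds _ lfTopology g) := by
    have := (@Continuous.tendsto _ _ (supNormTop K) lfTopology _ hι q0).comp hq
    exact this
  exact @mem_closure_of_tendsto ↥CcW lfTopology ℕ g _ _ atTop _ htend
    (Eventually.of_forall fun n => hpA n)
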